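/- Let h be a metric field on U. Suppose there are smooth vector fields e₁, …, eₙ : U → ℝⁿ whose values form a basis of ℝⁿ at every point of U, and smooth functions λ₁, …, λₙ : U → ℝ, such that h x (eᵢ x) (eⱼ x) = 0 for i ≠ j and h x (eᵢ x) (eᵢ x) = λᵢ x for all x ∈ U (an orthogonal frame diagonalizing h). Suppose further there are a point p ∈ U, an index k, a real ε > 0 and a C¹ curve c : [0, ε) → U with c(0) = p, λ_k(p) = 0 (so h is degenerate at p) and λ_k(c(t)) ≠ 0 for every t ∈ (0, ε). Then there exists no pair of smooth Christoffel maps Γ, Γ* on U that are mutually dual with respect to h; in other words, for every smooth connection Γ on U no smooth dual connection Γ* exists. (Paper's Proposition 2.5, in coordinates.) -/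

import Mathlib

noncomputable section

open Set
open Matrix

/-- ℝⁿ. -/
abbrev Vn (n : ℕ) : Type := Fin n → ℝ

/-- Bilinear forms on ℝⁿ (as continuous linear maps). -/
abbrev Biln (n : ℕ) : Type := Vn n →L[ℝ] Vn n →L[ℝ] ℝ

/-- Christoffel maps (values of a connection). -/
abbrev Chrn (n : ℕ) : Type := Vn n →L[ℝ] Vn n →L[ℝ] Vn n

/-- The cubic field `∇h` formed from a metric field `h` and a Christoffel map `Γ`. -/
def nablaH {n : ℕ} (h : Vn n → Biln n) (Γ : Vn n → Chrn n) (x v w u : Vn n) : ℝ :=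
  fderiv ℝ h x v w u - h x (Γ x v w) u - h x w (Γ x v u)

/-- Paper's Proposition 2.5 (in coordinates): if the metric field `h` is diagonalized
by a smooth orthogonal frame with eigenfunctions `λᵢ`, and `h` degenerates at a point
`p = c 0` of a C¹ curve `c` along which `λ_k` is nonzero for `t ∈ (0, ε)`, then there
is no pair of smooth Christoffel maps on `U` that are mutually dual with respect
to `h`. -/
theorem statement5 {n : ℕ} (hn : 1 ≤ n) (U : Set (Vn n)) (hUopen : IsOpen U)
    (h : Vn n → Biln n) (hsmooth : ContDiffOn ℝ (⊤ : ℕ∞) h U)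
    (hsymm : ∀ x ∈ U, ∀ v w : Vn n, h x v w = h x w v)
    (e : Fin n → Vn n → Vn n)
    (hesmooth : ∀ i, ContDiffOn ℝ (⊤ : ℕ∞) (e i) U)
    (hbasis : ∀ x ∈ U, LinearIndependent ℝ (fun i : Fin n => e i x))
    (lam : Fin n → Vn n → ℝ)
    (hlamsmooth : ∀ i, ContDiffOn ℝ (⊤ : ℕ∞) (lam i) U)
    (horth : ∀ x ∈ U, ∀ i j : Fin n, i ≠ j → h x (e i x) (e j x) = 0)
    (hdiag : ∀ x ∈ U, ∀ i : Fin n, h x (e i x) (e i x) = lam i x)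
    (p : Vn n) (hp : p ∈ U) (k : Fin n) (ε : ℝ) (hε : 0 < ε)
    (c : ℝ → Vn n) (hc : ContDiffOn ℝ 1 c (Ico 0 ε))
    (hcU : ∀ t ∈ Ico (0:ℝ) ε, c t ∈ U)
    (hc0 : c 0 = p)
    (hdeg : lam k p = 0)
    (hne : ∀ t ∈ Ioo (0:ℝ) ε, lam k (c t) ≠ 0) :
    ¬ ∃ Γ Γs : Vn n → Chrn n,
        ContDiffOn ℝ (⊤ : ℕ∞) Γ U ∧ ContDiffOn ℝ (⊤ : ℕ∞) Γs U ∧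
        ∀ x ∈ U, ∀ v w u : Vn n,
          fderiv ℝ h x v w u = h x (Γ x v w) u + h x w (Γs x v u) := by
  rintro ⟨Γ, Γs, hΓ, hΓs, hdual⟩
  classical
  -- matrix of the frame
  set M : Vn n → Matrix (Fin n) (Fin n) ℝ := fun x => Matrix.of fun i j => e j x i with hM
  have hMunit : ∀ x ∈ U, IsUnit (M x) := by
    intro x hx
    rw [← Matrix.linearIndependent_cols_iff_isUnit]
    convert hbasis x hx using 1
    all_goals rfl
  have hdetu : ∀ x ∈ U, IsUnit (M x).det := fun x hx =>
    (Matrix.isUnit_iff_isUnit_det _).1 (hMunit x hx)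
  have hdet : ∀ x ∈ U, (M x).det ≠ 0 := fun x hx => (hdetu x hx).ne_zero
  -- coordinate lemma
  have hcoord : ∀ x ∈ U, ∀ w : Vn n, h x w (e k x) = ((M x)⁻¹ *ᵥ w) k * lam k x := by
    intro x hx w
    set cv : Vn n := (M x)⁻¹ *ᵥ w with hcv
    have hw : w = ∑ j, cv j • e j x := by
      have h1 : M x *ᵥ cv = w := by
        rw [hcv, Matrix.mulVec_mulVec, Matrix.mul_nonsing_inv _ (hdetu x hx),
          Matrix.one_mulVec]
      rw [← h1]
      funext i
      simp [Matrix.mulVec, dotProduct, hM, Finset.sum_apply, mul_comm]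
    calc h x w (e k x) = ∑ j, cv j * h x (e j x) (e k x) := by
          rw [hw]; simp [ContinuousLinearMap.sum_apply]
      _ = cv k * lam k x := by
          rw [Finset.sum_eq_single k]
          · rw [hdiag x hx]
          · intro j _ hj
            rw [horth x hx j k hj, mul_zero]
          · simp
  -- the curve data
  have hTpos : (0:ℝ) < ε/2 := half_pos hε
  have hTlt : ε/2 < ε := half_lt_self hε
  set c' : ℝ → Vn n := fun t => derivWithin c (Ico 0 ε) t with hc'def
  set g : ℝ → ℝ := fun t =>
    ((((M (c t))⁻¹ *ᵥ (Γ (c t) (c' t) (e k (c t)))) k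
      + ((M (c t))⁻¹ *ᵥ (Γs (c t) (c' t) (e k (c t)))) k)
      + 2 * ((M (c t))⁻¹ *ᵥ (fderiv ℝ (e k) (c t) (c' t))) k) with hgdef
  set f : ℝ → ℝ := fun t => lam k (c t) with hfdef
  -- derivative of f along the curve
  have hderiv : ∀ t ∈ Ico (0:ℝ) ε, HasDerivWithinAt f (g t * f t) (Ico 0 ε) t := by
    intro t ht
    have hx : c t ∈ U := hcU t ht
    have hdh : HasFDerivAt h (fderiv ℝ h (c t)) (c t) :=
      ((hsmooth.differentiableOn (by simp)).differentiableAt (hUopen.mem_nhds hx)).hasFDerivAt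
    have hde : HasFDerivAt (e k) (fderiv ℝ (e k) (c t)) (c t) :=
      (((hesmooth k).differentiableOn (by simp)).differentiableAt (hUopen.mem_nhds hx)).hasFDerivAt
    have h1 := hdh.clm_apply hde
    have h2 := h1.clm_apply hde
    have hcd : HasDerivWithinAt c (c' t) (Ico 0 ε) t :=
      ((hc.differentiableOn one_ne_zero) t ht).hasDerivWithinAt
    have h3 := h2.comp_hasDerivWithinAt t hcd
    have h4 : HasDerivWithinAt f
        ((((fun y => h y (e k y)) (c t)).comp (fderiv ℝ (e k) (c t)) +
          ((h (c t)).comp (fderiv ℝ (e k) (c t)) +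
            (fderiv ℝ h (c t)).flip (e k (c t))).flip (e k (c t))) (c' t)) (Ico 0 ε) t := by
      refine h3.congr (fun y hy => ?_) ?_
      · simp only [hfdef, Function.comp_apply]
        rw [hdiag (c y) (hcU y hy) k]
      · simp only [hfdef, Function.comp_apply]
        rw [hdiag (c t) hx k]
    convert h4 using 1
    simp only [ContinuousLinearMap.add_apply, ContinuousLinearMap.comp_apply,
      ContinuousLinearMap.flip_apply]
    rw [hdual (c t) hx (c' t) (e k (c t)) (e k (c t)),
      hsymm (c t) hx (e k (c t)) (fderiv ℝ (e k) (c t) (c' t)),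
      hsymm (c t) hx (e k (c t)) (Γs (c t) (c' t) (e k (c t))),
      hcoord (c t) hx (fderiv ℝ (e k) (c t) (c' t)),
      hcoord (c t) hx (Γ (c t) (c' t) (e k (c t))),
      hcoord (c t) hx (Γs (c t) (c' t) (e k (c t)))]
    simp only [hgdef, hfdef]
    ring
  -- continuity facts
  have hccont : ContinuousOn c (Ico 0 ε) := hc.continuousOn
  have hc'cont : ContinuousOn c' (Ico 0 ε) :=
    hc.continuousOn_derivWithin (uniqueDiffOn_Ico 0 ε) le_rfl
  have hmaps : ∀ t ∈ Ico (0:ℝ) ε, c t ∈ U := hcU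
  have hMcont : ContinuousOn M U := by
    apply continuousOn_pi.2; intro i; apply continuousOn_pi.2; intro j
    exact (continuous_apply i).comp_continuousOn (hesmooth j).continuousOn
  have hMinv : ContinuousOn (fun x => (M x)⁻¹) U := by
    have hdc : Continuous (fun A : Matrix (Fin n) (Fin n) ℝ => A.det) :=
      continuous_id.matrix_det
    have hac : Continuous (fun A : Matrix (Fin n) (Fin n) ℝ => A.adjugate) :=
      continuous_id.matrix_adjugate
    have hdetc : ContinuousOn (fun x => (M x).det) U := hdc.comp_continuousOn hMcont
    have hadj : ContinuousOn (fun x => (M x).adjugate) U := hac.comp_continuousOn hMcont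
    have hsmul : ContinuousOn (fun x => ((M x).det)⁻¹ • (M x).adjugate) U :=
      (hdetc.inv₀ hdet).smul hadj
    refine hsmul.congr fun x hx => ?_
    rw [Matrix.inv_def, Ring.inverse_eq_inv]
  have hekcont : ContinuousOn (fun t => e k (c t)) (Ico 0 ε) :=
    (hesmooth k).continuousOn.comp hccont hmaps
  have hΓcont : ContinuousOn (fun t => Γ (c t) (c' t) (e k (c t))) (Ico 0 ε) :=
    ((hΓ.continuousOn.comp hccont hmaps).clm_apply hc'cont).clm_apply hekcont
  have hΓscont : ContinuousOn (fun t => Γs (c t) (c' t) (e k (c t))) (Ico 0 ε) :=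
    ((hΓs.continuousOn.comp hccont hmaps).clm_apply hc'cont).clm_apply hekcont
  have hDecont : ContinuousOn (fun t => fderiv ℝ (e k) (c t) (c' t)) (Ico 0 ε) :=
    (((hesmooth k).continuousOn_fderiv_of_isOpen hUopen (by exact_mod_cast le_top)).comp hccont hmaps).clm_apply
      hc'cont
  have hcomp : ∀ w : ℝ → Vn n, ContinuousOn w (Ico 0 ε) →
      ContinuousOn (fun t => ((M (c t))⁻¹ *ᵥ w t) k) (Ico 0 ε) := by
    intro w hw
    have hrw : ∀ t, ((M (c t))⁻¹ *ᵥ w t) k = ∑ j, (M (c t))⁻¹ k j * w t j := by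
      intro t; simp [Matrix.mulVec, dotProduct]
    simp only [hrw]
    refine continuousOn_finset_sum _ fun j _ => ContinuousOn.mul ?_ ?_
    · exact ((continuous_apply j).comp (continuous_apply k)).comp_continuousOn
        (hMinv.comp hccont hmaps)
    · exact (continuous_apply j).comp_continuousOn hw
  have hgcont : ContinuousOn g (Ico 0 ε) := by
    simp only [hgdef]
    exact (((hcomp _ hΓcont).add (hcomp _ hΓscont)).add
      (continuousOn_const.mul (hcomp _ hDecont)))
  -- bound on Icc 0 (ε/2)
  have hsub : Icc (0:ℝ) (ε/2) ⊆ Ico 0 ε := fun t ht => ⟨ht.1, lt_of_le_of_lt ht.2 hTlt⟩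
  obtain ⟨C, hC⟩ := isCompact_Icc.exists_bound_of_continuousOn (hgcont.mono hsub)
  have hfcont : ContinuousOn f (Icc 0 (ε/2)) :=
    (hlamsmooth k).continuousOn.comp (hccont.mono hsub) fun t ht => hcU t (hsub ht)
  have hderiv' : ∀ t ∈ Ico (0:ℝ) (ε/2), HasDerivWithinAt f (g t * f t) (Ici t) t := by
    intro t ht
    have htε : t ∈ Ico (0:ℝ) ε := ⟨ht.1, ht.2.trans hTlt⟩
    refine (hderiv t htε).mono_of_mem_nhdsWithin ?_
    rw [mem_nhdsWithin]
    exact ⟨Iio ε, isOpen_Iio, htε.2, fun y hy => ⟨le_trans ht.1 hy.2, hy.1⟩⟩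
  have hbound := norm_le_gronwallBound_of_norm_deriv_right_le (δ := 0) (K := C) (ε := 0)
    hfcont hderiv' (by simp [hfdef, hc0, hdeg]) ?_
  · have ht0 : ε/4 ∈ Icc (0:ℝ) (ε/2) :=
      ⟨by positivity, by linarith⟩
    have := hbound (ε/4) ht0
    rw [gronwallBound_ε0_δ0] at this
    have hf0 : f (ε/4) = 0 := by
      have := norm_le_zero_iff.1 (by simpa using this)
      simpa using this
    exact hne (ε/4) ⟨by positivity, by linarith⟩ hf0
  · intro t ht
    rw [norm_mul, add_zero]
    exact mul_le_mul_of_nonneg_right (hC t ⟨ht.1, ht.2.le⟩) (norm_nonneg _)
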